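/- For any natural numbers a, b, the function (x,y) ↦ (1/(x−y))·(((e^y−1)/y)·x^a y^b − ((e^x−1)/x)·x^b y^a), where (e^t−1)/t is interpreted as the entire function Σ_{n≥0} t^n/(n+1)!, extends to an analytic function on ℝ². -/

import Mathlib

noncomputable def phi (t : ℝ) : ℝ := ∑' n : ℕ, t ^ n / (Nat.factorial (n + 1) : ℝ)

/-! Auxiliary development. -/

section Aux

open ContinuousMultilinearMap Finset

/-- 1-variable power series of `phi`. -/
noncomputable def phiSeries : FormalMultilinearSeries ℝ ℝ ℝ := fun n =>
  ContinuousMultilinearMap.mkPiRing ℝ (Fin n) (((n + 1).factorial : ℝ)⁻¹)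

lemma phiSeries_apply (n : ℕ) (t : ℝ) :
    phiSeries n (fun _ => t) = t ^ n / ((n + 1).factorial : ℝ) := by
  simp [phiSeries, ContinuousMultilinearMap.mkPiRing_apply, div_eq_mul_inv, smul_eq_mul]

lemma phiSeries_norm (n : ℕ) : ‖phiSeries n‖ = (((n + 1).factorial : ℝ))⁻¹ := by
  rw [phiSeries, ContinuousMultilinearMap.norm_mkPiRing]
  rw [Real.norm_eq_abs, abs_of_nonneg (by positivity)]

lemma factorial_inv_le (n : ℕ) : (((n + 1).factorial : ℝ))⁻¹ ≤ ((n.factorial : ℝ))⁻¹ := by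
  apply inv_anti₀
  · positivity
  · exact_mod_cast Nat.factorial_le (Nat.le_succ n)

lemma phiSeries_radius : phiSeries.radius = ⊤ := by
  apply FormalMultilinearSeries.radius_eq_top_of_summable_norm
  intro r
  apply Summable.of_nonneg_of_le (fun n => by positivity)
    (fun n => ?_) (Real.summable_pow_div_factorial r)
  rw [phiSeries_norm]
  calc (((n + 1).factorial : ℝ))⁻¹ * (r : ℝ) ^ n
      ≤ ((n.factorial : ℝ))⁻¹ * (r : ℝ) ^ n := by
        apply mul_le_mul_of_nonneg_right (factorial_inv_le n) (by positivity)
    _ = (r : ℝ) ^ n / (n.factorial : ℝ) := by ring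

lemma phi_eq_sum : phi = phiSeries.sum := by
  funext t
  rw [phi, FormalMultilinearSeries.sum]
  exact tsum_congr fun n => (phiSeries_apply n t).symm

lemma phi_analytic : AnalyticOnNhd ℝ phi Set.univ := by
  rw [phi_eq_sum]
  intro x _
  have h := phiSeries.hasFPowerSeriesOnBall (by rw [phiSeries_radius]; exact ENNReal.zero_lt_top)
  rw [phiSeries_radius] at h
  have : x ∈ Metric.eball (0 : ℝ) ⊤ := by simp
  simpa using h.analyticAt_of_mem this

lemma summable_phi (t : ℝ) : Summable fun n : ℕ => t ^ n / ((n + 1).factorial : ℝ) := by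
  apply Summable.of_norm
  apply Summable.of_nonneg_of_le (fun n => by positivity) (fun n => ?_)
    (Real.summable_pow_div_factorial ‖t‖)
  rw [norm_div, norm_pow, Real.norm_eq_abs (((n+1).factorial : ℝ)),
    abs_of_nonneg (by positivity)]
  rw [div_le_div_iff₀ (by positivity) (by positivity)]
  calc ‖t‖ ^ n * n.factorial ≤ ‖t‖ ^ n * (n+1).factorial := by
        apply mul_le_mul_of_nonneg_left _ (by positivity)
        exact_mod_cast Nat.factorial_le (Nat.le_succ n)
    _ = _ := by ring

/-- 2-variable power series for the divided difference `(phi x - phi y)/(x - y)`. -/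
noncomputable def psiSeries : FormalMultilinearSeries ℝ (ℝ × ℝ) ℝ := fun n =>
  ((n + 2).factorial : ℝ)⁻¹ •
    ∑ i ∈ Finset.range (n + 1),
      (ContinuousMultilinearMap.mkPiAlgebra ℝ (Fin n) ℝ).compContinuousLinearMap
        (fun k => if (k : ℕ) < i then ContinuousLinearMap.fst ℝ ℝ ℝ
          else ContinuousLinearMap.snd ℝ ℝ ℝ)

lemma prod_ite_pow (n i : ℕ) (hi : i ≤ n) (x y : ℝ) :
    (∏ k : Fin n, (if (k : ℕ) < i then x else y)) = x ^ i * y ^ (n - i) := by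
  rw [Fin.prod_univ_eq_prod_range (fun k => if k < i then x else y) n]
  rw [Finset.prod_ite]
  have h1 : Finset.filter (fun k => k < i) (Finset.range n) = Finset.range i := by
    ext k; simp; omega
  have h2 : (Finset.filter (fun k => ¬ k < i) (Finset.range n)).card = n - i := by
    have : Finset.filter (fun k => ¬ k < i) (Finset.range n) = Finset.Ico i n := by
      ext k; simp; omega
    rw [this, Nat.card_Ico]
  rw [h1, Finset.prod_const, Finset.prod_const, h2, Finset.card_range]

lemma psiSeries_apply (n : ℕ) (x y : ℝ) :
    psiSeries n (fun _ => (x, y)) =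
      ((n + 2).factorial : ℝ)⁻¹ * ∑ i ∈ Finset.range (n + 1), x ^ i * y ^ (n - i) := by
  rw [psiSeries]
  rw [ContinuousMultilinearMap.smul_apply, ContinuousMultilinearMap.sum_apply, smul_eq_mul]
  congr 1
  apply Finset.sum_congr rfl
  intro i hi
  rw [Finset.mem_range] at hi
  rw [ContinuousMultilinearMap.compContinuousLinearMap_apply,
    ContinuousMultilinearMap.mkPiAlgebra_apply]
  have : ∀ k : Fin n,
      (if (k : ℕ) < i then ContinuousLinearMap.fst ℝ ℝ ℝ else ContinuousLinearMap.snd ℝ ℝ ℝ)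
        ((fun _ : Fin n => (x, y)) k) = (if (k : ℕ) < i then x else y) := by
    intro k; split <;> rfl
  rw [Finset.prod_congr rfl (fun k _ => this k)]
  exact prod_ite_pow n i (by omega) x y

lemma psiSeries_norm_le (n : ℕ) :
    ‖psiSeries n‖ ≤ (n + 1) * (((n + 2).factorial : ℝ))⁻¹ := by
  simp only [psiSeries]
  refine le_trans (ContinuousMultilinearMap.opNorm_smul_le _ _) ?_
  rw [Real.norm_eq_abs, abs_of_nonneg (by positivity)]
  rw [mul_comm ((n:ℝ)+1)]
  apply mul_le_mul_of_nonneg_left _ (by positivity)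
  calc ‖∑ i ∈ Finset.range (n + 1),
        (ContinuousMultilinearMap.mkPiAlgebra ℝ (Fin n) ℝ).compContinuousLinearMap
          (fun k => if (k : ℕ) < i then ContinuousLinearMap.fst ℝ ℝ ℝ
            else ContinuousLinearMap.snd ℝ ℝ ℝ)‖
      ≤ ∑ i ∈ Finset.range (n + 1), (1 : ℝ) := by
        apply norm_sum_le_of_le
        intro i _
        refine le_trans (ContinuousMultilinearMap.norm_compContinuousLinearMap_le _ _) ?_
        have h1 : ‖ContinuousMultilinearMap.mkPiAlgebra ℝ (Fin n) ℝ‖ = 1 :=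
          ContinuousMultilinearMap.norm_mkPiAlgebra
        rw [h1, one_mul]
        calc ∏ k : Fin n, ‖if (k : ℕ) < i then ContinuousLinearMap.fst ℝ ℝ ℝ
              else ContinuousLinearMap.snd ℝ ℝ ℝ‖
            ≤ ∏ k : Fin n, (1:ℝ) := by
              apply Finset.prod_le_prod (fun k _ => norm_nonneg _)
              intro k _
              split
              · exact ContinuousLinearMap.norm_fst_le ℝ ℝ ℝ
              · exact ContinuousLinearMap.norm_snd_le ℝ ℝ ℝ
          _ = 1 := by simp
    _ = (n + 1 : ℝ) := by simp
  
lemma psiSeries_radius : psiSeries.radius = ⊤ := by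
  apply FormalMultilinearSeries.radius_eq_top_of_summable_norm
  intro r
  apply Summable.of_nonneg_of_le (fun n => by positivity)
    (fun n => ?_) ((Real.summable_pow_div_factorial r).mul_left 1)
  calc ‖psiSeries n‖ * (r:ℝ) ^ n
      ≤ ((n + 1) * (((n + 2).factorial : ℝ))⁻¹) * (r:ℝ) ^ n := by
        apply mul_le_mul_of_nonneg_right (psiSeries_norm_le n) (by positivity)
    _ ≤ (1 * ((n.factorial : ℝ))⁻¹) * (r:ℝ) ^ n := by
        apply mul_le_mul_of_nonneg_right _ (by positivity)
        rw [one_mul]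
        rw [← div_eq_mul_inv]
        rw [div_le_iff₀ (by positivity)]
        rw [inv_mul_eq_div, le_div_iff₀ (by positivity)]
        have h3 : ((n:ℝ) + 1) * n.factorial = ((n+1).factorial : ℝ) := by
          rw [Nat.factorial_succ]; push_cast; ring
        rw [h3]
        exact_mod_cast Nat.factorial_le (by omega)
    _ = 1 * ((r:ℝ) ^ n / n.factorial) := by ring

lemma psi_analytic : AnalyticOnNhd ℝ psiSeries.sum Set.univ := by
  intro x _
  have h := psiSeries.hasFPowerSeriesOnBall (by rw [psiSeries_radius]; exact ENNReal.zero_lt_top)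
  rw [psiSeries_radius] at h
  have : x ∈ Metric.eball (0 : ℝ × ℝ) ⊤ := by simp
  simpa using h.analyticAt_of_mem this

lemma psi_key (x y : ℝ) : (x - y) * psiSeries.sum (x, y) = phi x - phi y := by
  have hsum : ∀ t : ℝ, Summable fun n : ℕ => t ^ n / ((n + 1).factorial : ℝ) := summable_phi
  rw [FormalMultilinearSeries.sum, ← tsum_mul_left]
  have hterm : ∀ n : ℕ, (x - y) * psiSeries n (fun _ => (x, y)) =
      (x ^ (n+1) - y ^ (n+1)) / ((n + 2).factorial : ℝ) := by
    intro n
    rw [psiSeries_apply]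
    have hg := geom_sum₂_mul x y (n + 1)
    have : ∑ i ∈ Finset.range (n + 1), x ^ i * y ^ (n - i) =
        ∑ i ∈ Finset.range (n + 1), x ^ i * y ^ (n + 1 - 1 - i) := by
      apply Finset.sum_congr rfl; intro i hi; norm_num
    rw [this]
    calc (x - y) * (((n + 2).factorial : ℝ)⁻¹ *
          ∑ i ∈ Finset.range (n + 1), x ^ i * y ^ (n + 1 - 1 - i))
        = ((∑ i ∈ Finset.range (n + 1), x ^ i * y ^ (n + 1 - 1 - i)) * (x - y)) *
            ((n + 2).factorial : ℝ)⁻¹ := by ring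
      _ = (x ^ (n+1) - y ^ (n+1)) * ((n + 2).factorial : ℝ)⁻¹ := by rw [hg]
      _ = (x ^ (n+1) - y ^ (n+1)) / ((n + 2).factorial : ℝ) := (div_eq_mul_inv _ _).symm
  rw [tsum_congr hterm]
  have hphi : phi x - phi y = ∑' n : ℕ, (x ^ n - y ^ n) / ((n + 1).factorial : ℝ) := by
    rw [phi, phi, ← Summable.tsum_sub (hsum x) (hsum y)]
    exact tsum_congr fun n => by ring
  rw [hphi]
  have hs : Summable fun n : ℕ => (x ^ n - y ^ n) / ((n + 1).factorial : ℝ) :=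
    ((hsum x).sub (hsum y)).congr (fun n => by ring)
  rw [Summable.tsum_eq_zero_add hs]
  simp only [pow_zero, sub_self, zero_div, zero_add]

end Aux

theorem analytic_extension (a b : ℕ) :
    ∃ g : ℝ × ℝ → ℝ, AnalyticOnNhd ℝ g Set.univ ∧
      ∀ p : ℝ × ℝ, p.1 ≠ p.2 →
        g p = (1 / (p.1 - p.2)) *
          (phi p.2 * (p.1 ^ a * p.2 ^ b) - phi p.1 * (p.1 ^ b * p.2 ^ a)) := by
  -- polynomial part P with (x - y) * P = x^a y^b - x^b y^a
  set P : ℝ × ℝ → ℝ := fun p =>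
    if b ≤ a then p.1 ^ b * p.2 ^ b * ∑ i ∈ Finset.range (a - b), p.1 ^ i * p.2 ^ (a - b - 1 - i)
    else -(p.1 ^ a * p.2 ^ a * ∑ i ∈ Finset.range (b - a), p.1 ^ i * p.2 ^ (b - a - 1 - i))
    with hP
  have hPkey : ∀ p : ℝ × ℝ, (p.1 - p.2) * P p = p.1 ^ a * p.2 ^ b - p.1 ^ b * p.2 ^ a := by
    intro p
    obtain ⟨x, y⟩ := p
    rw [hP]
    by_cases h : b ≤ a
    · simp only [if_pos h]
      have hg := geom_sum₂_mul x y (a - b)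
      have hxa : x ^ b * x ^ (a - b) = x ^ a := by rw [← pow_add]; congr 1; omega
      have hya : y ^ b * y ^ (a - b) = y ^ a := by rw [← pow_add]; congr 1; omega
      calc (x - y) * (x ^ b * y ^ b * ∑ i ∈ Finset.range (a - b), x ^ i * y ^ (a - b - 1 - i))
          = ((∑ i ∈ Finset.range (a - b), x ^ i * y ^ (a - b - 1 - i)) * (x - y)) *
              (x ^ b * y ^ b) := by ring
        _ = (x ^ (a - b) - y ^ (a - b)) * (x ^ b * y ^ b) := by rw [hg]
        _ = x ^ a * y ^ b - x ^ b * y ^ a := by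
            rw [sub_mul]; rw [show x ^ (a-b) * (x^b*y^b) = (x^b * x^(a-b)) * y^b by ring, hxa,
              show y ^ (a-b) * (x^b*y^b) = x^b * (y^b * y^(a-b)) by ring, hya]
    · simp only [if_neg h]
      have hg := geom_sum₂_mul x y (b - a)
      have hxa : x ^ a * x ^ (b - a) = x ^ b := by rw [← pow_add]; congr 1; omega
      have hya : y ^ a * y ^ (b - a) = y ^ b := by rw [← pow_add]; congr 1; omega
      calc (x - y) * -(x ^ a * y ^ a * ∑ i ∈ Finset.range (b - a), x ^ i * y ^ (b - a - 1 - i))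
          = -(((∑ i ∈ Finset.range (b - a), x ^ i * y ^ (b - a - 1 - i)) * (x - y)) *
              (x ^ a * y ^ a)) := by ring
        _ = -((x ^ (b - a) - y ^ (b - a)) * (x ^ a * y ^ a)) := by rw [hg]
        _ = x ^ a * y ^ b - x ^ b * y ^ a := by
            rw [sub_mul, neg_sub]
            rw [show x ^ (b-a) * (x^a*y^a) = (x^a * x^(b-a)) * y^a by ring, hxa,
              show y ^ (b-a) * (x^a*y^a) = x^a * (y^a * y^(b-a)) by ring, hya]
  have hPanalytic : AnalyticOnNhd ℝ P Set.univ := by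
    intro p _
    have hmono : ∀ (m k : ℕ), AnalyticAt ℝ (fun q : ℝ × ℝ => q.1 ^ m * q.2 ^ k) p :=
      fun m k => ((analyticAt_fst.pow m).mul (analyticAt_snd.pow k))
    have hsum : ∀ (c : ℕ), AnalyticAt ℝ
        (fun q : ℝ × ℝ => ∑ i ∈ Finset.range c, q.1 ^ i * q.2 ^ (c - 1 - i)) p := by
      intro c
      exact Finset.analyticAt_fun_sum _ (fun i _ => hmono i (c - 1 - i))
    rw [hP]
    by_cases h : b ≤ a
    · simp only [if_pos h]
      exact (hmono b b).mul (hsum (a - b))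
    · simp only [if_neg h]
      exact ((hmono a a).mul (hsum (b - a))).neg
  refine ⟨fun p => phi p.1 * P p - p.1 ^ a * p.2 ^ b * psiSeries.sum p, ?_, ?_⟩
  · intro p hp
    have hphi1 : AnalyticAt ℝ (fun q : ℝ × ℝ => phi q.1) p :=
      (phi_analytic p.1 trivial).comp analyticAt_fst
    exact ((hphi1.mul (hPanalytic p hp)).sub
      (((analyticAt_fst.pow a).mul (analyticAt_snd.pow b)).mul (psi_analytic p hp)))
  · intro p hne
    obtain ⟨x, y⟩ := p
    dsimp only at hne ⊢
    have h1 := psi_key x y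
    have h2 := hPkey (x, y)
    dsimp only at h2
    have hxy : x - y ≠ 0 := sub_ne_zero.mpr hne
    rw [eq_comm, one_div, inv_mul_eq_div, div_eq_iff hxy]
    linear_combination (-(phi x)) * h2 + x ^ a * y ^ b * h1
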